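/- Let (K; ∂₁,…,∂_m) be a 𝒟-field with associated F-algebra homomorphism δ_K : K → 𝒟_K. Then (K; ∂₁,…,∂_m) is inversive if and only if e = (e₀,…,e_m) is a basis of 𝒟_K as a K-vector space with scalar multiplication given through δ_K (i.e., every element of 𝒟_K can be written uniquely as Σ_{i=0}^m δ_K(a_i)·e_i with a₀,…,a_m ∈ K). In particular, if 𝒟_F is a local F-algebra, then e is a basis of 𝒟_K via δ_K. -/

import Mathlib

open scoped TensorProduct

-- injective of surjective ring endo of noetherian ring
lemma MS.inj_of_surj {A : Type*} [CommRing A] [IsNoetherianRing A] (g : A →+* A)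
    (h : Function.Surjective g) : Function.Injective g := by
  have hpow : ∀ n : ℕ, Function.Surjective (g ^ n) := by
    intro n
    induction n with
    | zero => exact fun x => ⟨x, rfl⟩
    | succ n ih => rw [pow_succ]; exact (ih.comp h :)
  have hmono : Monotone fun n : ℕ => (RingHom.ker (g ^ n) : Submodule A A) := by
    apply monotone_nat_of_le_succ
    intro n x hx
    have : (g ^ n) x = 0 := hx
    show (g ^ (n+1)) x = 0
    rw [pow_succ']
    show g ((g ^ n) x) = 0
    rw [this, map_zero]
  obtain ⟨n, hn⟩ := monotone_stabilizes_iff_noetherian.mpr inferInstance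
    ⟨fun n => (RingHom.ker (g ^ n) : Submodule A A), hmono⟩
  rw [injective_iff_map_eq_zero]
  intro x hx
  obtain ⟨y, hy⟩ := hpow n x
  have hy1 : y ∈ RingHom.ker (g ^ (n+1)) := by
    show (g ^ (n+1)) y = 0
    rw [pow_succ']
    show g ((g ^ n) y) = 0
    rw [hy, hx]
  have := hn (n+1) (Nat.le_succ n)
  have hy2 : y ∈ RingHom.ker (g ^ n) := by
    rw [show (RingHom.ker (g^n) : Submodule A A) = RingHom.ker (g^(n+1)) from this]
    exact hy1
  rw [← hy]; exact hy2

lemma MS.lemA {F D K : Type*} [Field F] [CommRing D] [Algebra F D] [FiniteDimensional F D]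
    [Field K] [Algebra F K]
    (hres : ∀ I : Ideal D, I.IsMaximal → Function.Bijective (algebraMap F (D ⧸ I)))
    (J : Ideal (K ⊗[F] D)) (hJ : J.IsMaximal) (r : K ⊗[F] D) :
    ∃ a : K, r - a ⊗ₜ[F] (1 : D) ∈ J := by
  haveI : IsArtinianRing D := isArtinian_of_tower F inferInstance
  set f : D →+* K ⊗[F] D :=
    (Algebra.TensorProduct.includeRight : D →ₐ[F] K ⊗[F] D).toRingHom with hf
  set I : Ideal D := Ideal.comap f J with hI
  haveI : J.IsPrime := hJ.isPrime
  haveI hIp : I.IsPrime := Ideal.IsPrime.comap f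
  haveI hImax : I.IsMaximal := IsArtinianRing.isMaximal_of_isPrime I
  have hsurj := (hres I hImax).2
  induction r using TensorProduct.induction_on with
  | zero => exact ⟨0, by simp⟩
  | tmul a d =>
      obtain ⟨c, hc⟩ := hsurj (Ideal.Quotient.mk I d)
      have h1 : d - algebraMap F D c ∈ I := by
        rw [← Ideal.Quotient.eq_zero_iff_mem]
        rw [map_sub]
        rw [show Ideal.Quotient.mk I (algebraMap F D c) = algebraMap F (D ⧸ I) c from rfl, hc]
        simp
      refine ⟨a * algebraMap F K c, ?_⟩
      have key : a ⊗ₜ[F] d - (a * algebraMap F K c) ⊗ₜ[F] (1 : D)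
          = (a ⊗ₜ[F] (1 : D)) * f (d - algebraMap F D c) := by
        have : f (d - algebraMap F D c) = (1 : K) ⊗ₜ[F] (d - algebraMap F D c) := rfl
        rw [this, Algebra.TensorProduct.tmul_mul_tmul, one_mul, mul_one,
          TensorProduct.tmul_sub]
        congr 1
        rw [Algebra.algebraMap_eq_smul_one (A := D), TensorProduct.tmul_smul,
          TensorProduct.smul_tmul', Algebra.smul_def, mul_comm]
      rw [key]
      exact J.mul_mem_left _ (Ideal.mem_comap.mp h1)
  | add x y hx hy =>
      obtain ⟨a, ha⟩ := hx
      obtain ⟨b, hb⟩ := hy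
      refine ⟨a + b, ?_⟩
      have : x + y - (a + b) ⊗ₜ[F] (1:D) = (x - a ⊗ₜ[F] (1:D)) + (y - b ⊗ₜ[F] (1:D)) := by
        rw [TensorProduct.add_tmul]; ring
      rw [this]; exact J.add_mem ha hb

section
variable {F D K : Type*} [Field F] [CommRing D] [Algebra F D] [Field K] [Algebra F K]

/-- The residue character `D →ₐ[F] F` attached to a maximal ideal with residue field `F`. -/
noncomputable def MS.resChar (I : Ideal D) (h : Function.Bijective (algebraMap F (D ⧸ I))) :
    D →ₐ[F] F :=
  ((AlgEquiv.ofBijective (Algebra.ofId F (D ⧸ I)) h).symm.toAlgHom).comp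
    (Ideal.Quotient.mkₐ F I)

lemma MS.resChar_eq_zero_iff (I : Ideal D) (h : Function.Bijective (algebraMap F (D ⧸ I)))
    (d : D) : MS.resChar I h d = 0 ↔ d ∈ I := by
  unfold MS.resChar
  simp only [AlgHom.comp_apply, Ideal.Quotient.mkₐ_eq_mk, AlgEquiv.toAlgHom_eq_coe,
    AlgHom.coe_coe]
  rw [← map_zero (AlgEquiv.ofBijective (Algebra.ofId F (D ⧸ I)) h).symm]
  refine ((AlgEquiv.ofBijective (Algebra.ofId F (D ⧸ I)) h).symm.injective.eq_iff).trans ?_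
  exact Ideal.Quotient.eq_zero_iff_mem

/-- `φ_I : K ⊗ D → K`, `a ⊗ d ↦ a · resChar I d`. -/
noncomputable def MS.phi (I : Ideal D) (h : Function.Bijective (algebraMap F (D ⧸ I))) :
    (K ⊗[F] D) →ₐ[F] K :=
  Algebra.TensorProduct.productMap (AlgHom.id F K) ((Algebra.ofId F K).comp (MS.resChar I h))

lemma MS.phi_tmul (I : Ideal D) (h : Function.Bijective (algebraMap F (D ⧸ I))) (a : K) (d : D) :
    MS.phi I h (a ⊗ₜ[F] d) = a * algebraMap F K (MS.resChar I h d) := by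
  unfold MS.phi
  rw [Algebra.TensorProduct.productMap_apply_tmul]
  rfl

lemma MS.sub_phi_mem (I : Ideal D) (h : Function.Bijective (algebraMap F (D ⧸ I)))
    (r : K ⊗[F] D) :
    r - (MS.phi I h r) ⊗ₜ[F] (1 : D) ∈
      Ideal.map (Algebra.TensorProduct.includeRight : D →ₐ[F] K ⊗[F] D).toRingHom I := by
  set f := (Algebra.TensorProduct.includeRight : D →ₐ[F] K ⊗[F] D).toRingHom
  induction r using TensorProduct.induction_on with
  | zero => simp
  | tmul a d =>
      rw [MS.phi_tmul]
      have key : a ⊗ₜ[F] d - (a * algebraMap F K (MS.resChar I h d)) ⊗ₜ[F] (1 : D)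
          = (a ⊗ₜ[F] (1 : D)) * f (d - algebraMap F D (MS.resChar I h d)) := by
        have : f (d - algebraMap F D (MS.resChar I h d))
            = (1 : K) ⊗ₜ[F] (d - algebraMap F D (MS.resChar I h d)) := rfl
        rw [this, Algebra.TensorProduct.tmul_mul_tmul, one_mul, mul_one,
          TensorProduct.tmul_sub]
        congr 1
        rw [Algebra.algebraMap_eq_smul_one (A := D), TensorProduct.tmul_smul,
          TensorProduct.smul_tmul', Algebra.smul_def, mul_comm]
      rw [key]
      refine Ideal.mul_mem_left _ _ (Ideal.mem_map_of_mem f ?_)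
      rw [← MS.resChar_eq_zero_iff I h, map_sub]
      have : MS.resChar I h (algebraMap F D (MS.resChar I h d)) = MS.resChar I h d := by
        rw [AlgHom.commutes]; rfl
      rw [this, sub_self]
  | add x y hx hy =>
      have : x + y - (MS.phi I h (x+y)) ⊗ₜ[F] (1:D)
          = (x - (MS.phi I h x) ⊗ₜ[F] (1:D)) + (y - (MS.phi I h y) ⊗ₜ[F] (1:D)) := by
        rw [map_add, TensorProduct.add_tmul]; ring
      rw [this]; exact Ideal.add_mem _ hx hy

lemma MS.ker_phi (I : Ideal D) (h : Function.Bijective (algebraMap F (D ⧸ I))) :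
    RingHom.ker (MS.phi (K := K) I h) =
      Ideal.map (Algebra.TensorProduct.includeRight : D →ₐ[F] K ⊗[F] D).toRingHom I := by
  apply le_antisymm
  · intro r hr
    have := MS.sub_phi_mem I h (K := K) r
    rw [show MS.phi (K := K) I h r = 0 from hr] at this
    simpa using this
  · rw [Ideal.map_le_iff_le_comap]
    intro d hd
    show MS.phi (K := K) I h ((1:K) ⊗ₜ[F] d) = 0
    rw [MS.phi_tmul, (MS.resChar_eq_zero_iff I h d).mpr hd, map_zero, mul_zero]

lemma MS.phi_surjective (I : Ideal D) (h : Function.Bijective (algebraMap F (D ⧸ I))) :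
    Function.Surjective (MS.phi (K := K) I h) := by
  intro a
  refine ⟨a ⊗ₜ[F] 1, ?_⟩
  rw [MS.phi_tmul, map_one, map_one, mul_one]

lemma MS.map_isMaximal (I : Ideal D) (h : Function.Bijective (algebraMap F (D ⧸ I))) :
    (Ideal.map (Algebra.TensorProduct.includeRight : D →ₐ[F] K ⊗[F] D).toRingHom I).IsMaximal := by
  rw [← MS.ker_phi (K := K) I h]
  exact RingHom.ker_isMaximal_of_surjective _ (MS.phi_surjective I h)

lemma MS.mu_surjective [Nontrivial D] [FiniteDimensional F D]
    (hres : ∀ I : Ideal D, I.IsMaximal → Function.Bijective (algebraMap F (D ⧸ I)))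
    (δ : K →ₐ[F] K ⊗[F] D)
    (H : ∀ J : Ideal (K ⊗[F] D), J.IsMaximal →
        Function.Surjective fun a : K => Ideal.Quotient.mk J (δ a)) :
    Function.Surjective
      (Algebra.TensorProduct.productMap δ
        (Algebra.TensorProduct.includeRight : D →ₐ[F] K ⊗[F] D)) := by
  classical
  haveI : IsArtinianRing D := isArtinian_of_tower F inferInstance
  set f : D →+* K ⊗[F] D :=
    (Algebra.TensorProduct.includeRight : D →ₐ[F] K ⊗[F] D).toRingHom with hf
  set μ : K ⊗[F] D →ₐ[F] K ⊗[F] D :=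
    Algebra.TensorProduct.productMap δ
      (Algebra.TensorProduct.includeRight : D →ₐ[F] K ⊗[F] D) with hμ
  set S : Subalgebra F (K ⊗[F] D) := μ.range with hS
  set jac : Ideal D := Ideal.jacobson (⊥ : Ideal D) with hjac
  set N : Ideal (K ⊗[F] D) := Ideal.map f jac with hN
  have hμtmul : ∀ (a : K) (d : D), μ (a ⊗ₜ[F] d) = δ a * ((1:K) ⊗ₜ[F] d) := by
    intro a d
    rw [hμ, Algebra.TensorProduct.productMap_apply_tmul]
    rfl
  have hfS : ∀ d : D, ((1:K) ⊗ₜ[F] d) ∈ S := by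
    intro d
    exact ⟨(1:K) ⊗ₜ[F] d, by show μ _ = _; rw [hμtmul, map_one, one_mul]⟩
  have hμS : ∀ (a : K) (d : D), δ a * ((1:K) ⊗ₜ[F] d) ∈ S := by
    intro a d
    exact ⟨a ⊗ₜ[F] d, by show μ _ = _; rw [hμtmul]⟩
  -- the finite set of maximal ideals of D
  have Tfin : {I : Ideal D | I.IsMaximal}.Finite :=
    Set.Finite.subset (IsArtinianRing.setOfPred_isPrime_finite D) (fun I hI => hI.isPrime)
  set T : Finset (Ideal D) := Tfin.toFinset with hT
  have hmemT : ∀ I : Ideal D, I ∈ T ↔ I.IsMaximal := by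
    intro I; rw [hT, Set.Finite.mem_toFinset]; rfl
  -- quasi-idempotents
  have key : ∀ I : Ideal D, ∃ d : D,
      I ∈ T → ((d - 1 ∈ I) ∧ ∀ I' ∈ T, I' ≠ I → d ∈ I') := by
    intro I
    by_cases hI : I ∈ T
    · have hImax : I.IsMaximal := (hmemT I).mp hI
      have hcop : I ⊔ (∏ I' ∈ T.erase I, I') = ⊤ := by
        apply Ideal.sup_prod_eq_top
        intro I' hI'
        exact hImax.coprime_of_ne ((hmemT I').mp (Finset.mem_of_mem_erase hI'))
          (Ne.symm (Finset.ne_of_mem_erase hI'))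
      have h1 : (1 : D) ∈ I ⊔ (∏ I' ∈ T.erase I, I') := hcop ▸ Submodule.mem_top
      obtain ⟨u, hu, v, hv, huv⟩ := Submodule.mem_sup.mp h1
      refine ⟨v, fun _ => ⟨?_, ?_⟩⟩
      · have : v - 1 = -u := by rw [← huv]; ring
        rw [this]; exact neg_mem hu
      · intro I' hI' hne
        have : (∏ I'' ∈ T.erase I, I'') ≤ I' :=
          le_trans Ideal.prod_le_inf (Finset.inf_le (Finset.mem_erase.mpr ⟨hne, hI'⟩))
        exact this hv
    · exact ⟨0, fun h => absurd h hI⟩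
  choose dd hdd using key
  -- Step 3a
  have step3a : ∀ a : K, ∃ s, s ∈ S ∧ a ⊗ₜ[F] (1:D) - s ∈ N := by
    intro a
    have hb : ∀ I : Ideal D, ∃ b : K,
        I ∈ T → δ b - a ⊗ₜ[F] (1:D) ∈ Ideal.map f I := by
      intro I
      by_cases hI : I ∈ T
      · have hImax : I.IsMaximal := (hmemT I).mp hI
        have hJmax : (Ideal.map f I).IsMaximal := MS.map_isMaximal I (hres I hImax)
        obtain ⟨b, hbb⟩ := H (Ideal.map f I) hJmax (Ideal.Quotient.mk _ (a ⊗ₜ[F] (1:D)))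
        exact ⟨b, fun _ => (Ideal.Quotient.eq (I := Ideal.map f I)).mp hbb⟩
      · exact ⟨0, fun h => absurd h hI⟩
    choose b hbmem using hb
    set A : K ⊗[F] D := a ⊗ₜ[F] (1:D) with hA
    set s : K ⊗[F] D := ∑ I ∈ T, δ (b I) * ((1:K) ⊗ₜ[F] dd I) with hs
    refine ⟨s, ?_, ?_⟩
    · exact Subalgebra.sum_mem S (fun I _ => hμS (b I) (dd I))
    · set V : K ⊗[F] D := ∑ I ∈ T, (1:K) ⊗ₜ[F] dd I with hV
      have expand : A - s = A * (1 - V) + ∑ I ∈ T, ((A - δ (b I)) * ((1:K) ⊗ₜ[F] dd I)) := by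
        have e1 : ∑ I ∈ T, ((A - δ (b I)) * ((1:K) ⊗ₜ[F] dd I))
            = A * V - s := by
          rw [hV, hs, Finset.mul_sum, ← Finset.sum_sub_distrib]
          apply Finset.sum_congr rfl
          intros; ring
        rw [e1]; ring
      rw [expand]
      refine N.add_mem ?_ (Ideal.sum_mem N ?_)
      · have hVf : (1 : K ⊗[F] D) - V = f ((1:D) - ∑ I ∈ T, dd I) := by
          rw [map_sub, map_one, map_sum, hV]
          rfl
        have hjm : (1:D) - ∑ I ∈ T, dd I ∈ jac := by
          rw [hjac]
          apply Ideal.mem_sInf.mpr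
          rintro J ⟨-, hJmax⟩
          have hJT : J ∈ T := (hmemT J).mpr hJmax
          have hsum : ∑ I ∈ T, dd I = dd J + ∑ I ∈ T.erase J, dd I :=
            (Finset.add_sum_erase T dd hJT).symm
          have : (1:D) - ∑ I ∈ T, dd I = -((dd J - 1) + ∑ I ∈ T.erase J, dd I) := by
            rw [hsum]; ring
          rw [this]
          refine neg_mem (J.add_mem (hdd J hJT).1 (Ideal.sum_mem J ?_))
          intro I hI
          exact (hdd I (Finset.mem_of_mem_erase hI)).2 J hJT
            (Ne.symm (Finset.ne_of_mem_erase hI))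
        rw [hVf]
        exact N.mul_mem_left A (Ideal.mem_map_of_mem f hjm)
      · intro I hIT
        have h1 : A - δ (b I) ∈ Ideal.map f I := by
          have := hbmem I hIT
          have h2 : A - δ (b I) = -(δ (b I) - A) := by ring
          rw [h2]; exact neg_mem this
        have h2 : ((1:K) ⊗ₜ[F] dd I) ∈ Ideal.map f (Ideal.span {dd I}) :=
          Ideal.mem_map_of_mem f (Ideal.subset_span rfl)
        have h3 := Ideal.mul_mem_mul h1 h2
        rw [← Ideal.map_mul] at h3
        refine Ideal.map_mono ?_ h3
        rw [Ideal.mul_le]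
        intro y hy z hz
        obtain ⟨w, rfl⟩ := Ideal.mem_span_singleton'.mp hz
        rw [hjac]
        apply Ideal.mem_sInf.mpr
        rintro J ⟨-, hJmax⟩
        have hJT : J ∈ T := (hmemT J).mpr hJmax
        by_cases hJI : J = I
        · subst hJI; exact J.mul_mem_right _ hy
        · have : dd I ∈ J := (hdd I hIT).2 J hJT hJI
          rw [← mul_assoc]
          exact J.mul_mem_left _ this
  -- Step 3b
  have step3b : ∀ r : K ⊗[F] D, ∃ s, s ∈ S ∧ r - s ∈ N := by
    intro r
    induction r using TensorProduct.induction_on with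
    | zero => exact ⟨0, S.zero_mem, by simp⟩
    | tmul a d =>
        obtain ⟨s, hsS, hn⟩ := step3a a
        refine ⟨s * ((1:K) ⊗ₜ[F] d), S.mul_mem hsS (hfS d), ?_⟩
        have : a ⊗ₜ[F] d - s * ((1:K) ⊗ₜ[F] d)
            = (a ⊗ₜ[F] (1:D) - s) * ((1:K) ⊗ₜ[F] d) := by
          rw [sub_mul, Algebra.TensorProduct.tmul_mul_tmul, mul_one, one_mul]
        rw [this]
        exact N.mul_mem_right _ hn
    | add x y hx hy =>
        obtain ⟨s₁, hs₁, hn₁⟩ := hx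
        obtain ⟨s₂, hs₂, hn₂⟩ := hy
        refine ⟨s₁ + s₂, S.add_mem hs₁ hs₂, ?_⟩
        have : x + y - (s₁ + s₂) = (x - s₁) + (y - s₂) := by ring
        rw [this]; exact N.add_mem hn₁ hn₂
  -- Step 3c
  have step3c : ∀ (t : ℕ) (x : K ⊗[F] D), x ∈ Ideal.map f (jac ^ t) →
      ∃ s, s ∈ S ∧ s ∈ Ideal.map f (jac ^ t) ∧ x - s ∈ Ideal.map f (jac ^ (t + 1)) := by
    intro t x hx
    have hspan : Ideal.map f (jac ^ t) = Ideal.span (f '' ((jac ^ t : Ideal D) : Set D)) := rfl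
    rw [hspan] at hx
    induction hx using Submodule.span_induction with
    | mem z hz =>
        obtain ⟨y, hy, rfl⟩ := hz
        exact ⟨f y, hfS y, Ideal.mem_map_of_mem f hy, by simp⟩
    | zero => exact ⟨0, S.zero_mem, Ideal.zero_mem _, by simp⟩
    | add x y hx hy ihx ihy =>
        obtain ⟨s₁, hs₁S, hs₁m, hd₁⟩ := ihx
        obtain ⟨s₂, hs₂S, hs₂m, hd₂⟩ := ihy
        refine ⟨s₁ + s₂, S.add_mem hs₁S hs₂S, Ideal.add_mem _ hs₁m hs₂m, ?_⟩
        have : x + y - (s₁ + s₂) = (x - s₁) + (y - s₂) := by ring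
        rw [this]; exact Ideal.add_mem _ hd₁ hd₂
    | smul r x hxmem ih =>
        obtain ⟨s, hsS, hsm, hd⟩ := ih
        obtain ⟨s₀, hs₀S, hn₀⟩ := step3b r
        refine ⟨s₀ * s, S.mul_mem hs₀S hsS, Ideal.mul_mem_left _ _ hsm, ?_⟩
        have hxmem' : x ∈ Ideal.map f (jac ^ t) := by rw [hspan]; exact hxmem
        have : r • x - s₀ * s = s₀ * (x - s) + (r - s₀) * x := by
          rw [smul_eq_mul]; ring
        rw [this]
        refine Ideal.add_mem _ (Ideal.mul_mem_left _ _ hd) ?_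
        have h4 := Ideal.mul_mem_mul hn₀ hxmem'
        rw [← Ideal.map_mul] at h4
        have h5 : jac * jac ^ t = jac ^ (t + 1) := by rw [pow_succ, mul_comm]
        rwa [h5] at h4
  -- Step 3d
  have step3d : ∀ (k t : ℕ) (x : K ⊗[F] D), x ∈ Ideal.map f (jac ^ t) →
      ∃ s, s ∈ S ∧ x - s ∈ Ideal.map f (jac ^ (t + k)) := by
    intro k
    induction k with
    | zero => exact fun t x hx => ⟨0, S.zero_mem, by simpa using hx⟩
    | succ k ih =>
        intro t x hx
        obtain ⟨s₁, hs₁S, -, hd₁⟩ := step3c t x hx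
        obtain ⟨s₂, hs₂S, hd₂⟩ := ih (t + 1) (x - s₁) hd₁
        refine ⟨s₁ + s₂, S.add_mem hs₁S hs₂S, ?_⟩
        have e : t + 1 + k = t + (k + 1) := by omega
        have : x - (s₁ + s₂) = (x - s₁) - s₂ := by ring
        rw [this, ← e]
        exact hd₂
  -- conclusion
  intro r
  obtain ⟨s, hsS, hn⟩ := step3b r
  obtain ⟨c, hc⟩ := IsArtinianRing.isNilpotent_jacobson_bot (R := D)
  obtain ⟨s', hs'S, hx⟩ := step3d c 1 (r - s) (by rwa [pow_one])
  have hzero : Ideal.map f (jac ^ (1 + c)) = ⊥ := by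
    rw [pow_add, pow_one, hjac, hc, mul_zero, Ideal.zero_eq_bot, Ideal.map_bot]
  rw [hzero, Ideal.mem_bot, sub_eq_zero] at hx
  have : r = s + s' := by rw [← hx]; ring
  have hr : r ∈ S := by rw [this]; exact S.add_mem hsS hs'S
  exact hr

lemma MS.existsUnique_iff_bijective (m : ℕ) (bD : Module.Basis (Fin (m + 1)) F D)
    (δ : K →ₐ[F] K ⊗[F] D) :
    (∀ r : K ⊗[F] D, ∃! a : Fin (m + 1) → K,
        r = ∑ i : Fin (m + 1), δ (a i) * ((1 : K) ⊗ₜ[F] bD i)) ↔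
      Function.Bijective
        (Algebra.TensorProduct.productMap δ
          (Algebra.TensorProduct.includeRight : D →ₐ[F] K ⊗[F] D)) := by
  set μ : K ⊗[F] D →ₐ[F] K ⊗[F] D :=
    Algebra.TensorProduct.productMap δ
      (Algebra.TensorProduct.includeRight : D →ₐ[F] K ⊗[F] D) with hμ
  set bK : Module.Basis (Fin (m + 1)) K (K ⊗[F] D) := Module.Basis.baseChange K bD with hbK
  have hg : ∀ a : Fin (m + 1) → K,
      μ (bK.equivFun.symm a) = ∑ i : Fin (m + 1), δ (a i) * ((1 : K) ⊗ₜ[F] bD i) := by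
    intro a
    rw [Module.Basis.equivFun_symm_apply, map_sum]
    apply Finset.sum_congr rfl
    intro i _
    rw [hbK, Module.Basis.baseChange_apply, TensorProduct.smul_tmul', smul_eq_mul, mul_one]
    rw [hμ, Algebra.TensorProduct.productMap_apply_tmul]
    rfl
  have h1 : (∀ r : K ⊗[F] D, ∃! a : Fin (m + 1) → K,
      r = ∑ i : Fin (m + 1), δ (a i) * ((1 : K) ⊗ₜ[F] bD i)) ↔
      Function.Bijective (⇑μ ∘ fun a : Fin (m + 1) → K => bK.equivFun.symm a) := by
    rw [Function.bijective_iff_existsUnique]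
    apply forall_congr'
    intro r
    apply existsUnique_congr
    intro a
    rw [Function.comp_apply, hg]
    exact eq_comm
  rw [h1]
  exact Function.Bijective.of_comp_iff ⇑μ
    (LinearEquiv.bijective (bK.equivFun.symm : (Fin (m+1) → K) ≃ₗ[K] K ⊗[F] D))


lemma MS.inversive_of_bijective [FiniteDimensional F D]
    (hres : ∀ I : Ideal D, I.IsMaximal → Function.Bijective (algebraMap F (D ⧸ I)))
    (δ : K →ₐ[F] K ⊗[F] D)
    (hbij : Function.Bijective
      (Algebra.TensorProduct.productMap δ
        (Algebra.TensorProduct.includeRight : D →ₐ[F] K ⊗[F] D)))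
    (J : Ideal (K ⊗[F] D)) (hJ : J.IsMaximal) :
    Function.Surjective fun a : K => Ideal.Quotient.mk J (δ a) := by
  set μ : K ⊗[F] D →ₐ[F] K ⊗[F] D :=
    Algebra.TensorProduct.productMap δ
      (Algebra.TensorProduct.includeRight : D →ₐ[F] K ⊗[F] D) with hμ
  intro x
  obtain ⟨r, rfl⟩ := Ideal.Quotient.mk_surjective x
  obtain ⟨r', rfl⟩ := hbij.2 r
  haveI hJ' : (Ideal.comap μ.toRingHom J).IsMaximal :=
    Ideal.comap_isMaximal_of_surjective _ hbij.2
  obtain ⟨a, ha⟩ := MS.lemA hres _ hJ' r'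
  refine ⟨a, ?_⟩
  have h1 : μ (r' - a ⊗ₜ[F] (1:D)) ∈ J := Ideal.mem_comap.mp ha
  rw [map_sub] at h1
  have hδa : μ (a ⊗ₜ[F] (1:D)) = δ a := by
    rw [hμ, Algebra.TensorProduct.productMap_apply_tmul, map_one, mul_one]
  rw [hδa] at h1
  show Ideal.Quotient.mk J (δ a) = Ideal.Quotient.mk J (μ r')
  rw [Ideal.Quotient.eq]
  have : δ a - μ r' = -(μ r' - δ a) := by ring
  rw [this]
  exact neg_mem h1

lemma MS.local_inversive [FiniteDimensional F D]
    (hres : ∀ I : Ideal D, I.IsMaximal → Function.Bijective (algebraMap F (D ⧸ I)))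
    (π : D →ₐ[F] F) (m : ℕ) (bD : Module.Basis (Fin (m + 1)) F D)
    (hb0 : π (bD 0) = 1) (hbi : ∀ i : Fin (m + 1), i ≠ 0 → π (bD i) = 0)
    (der : Fin m → K → K) (δ : K →ₐ[F] (K ⊗[F] D))
    (hδ : ∀ a : K, δ a = a ⊗ₜ[F] bD 0 + ∑ i : Fin m, (der i a) ⊗ₜ[F] bD i.succ)
    (hloc : IsLocalRing D)
    (J : Ideal (K ⊗[F] D)) (hJ : J.IsMaximal) :
    Function.Surjective fun a : K => Ideal.Quotient.mk J (δ a) := by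
  haveI := hloc
  haveI : IsArtinianRing D := isArtinian_of_tower F inferInstance
  set f : D →+* K ⊗[F] D :=
    (Algebra.TensorProduct.includeRight : D →ₐ[F] K ⊗[F] D).toRingHom with hf
  -- the contraction of J to D is the maximal ideal, which is the kernel of π
  haveI : J.IsPrime := hJ.isPrime
  set I : Ideal D := Ideal.comap f J with hI
  haveI hIp : I.IsPrime := Ideal.IsPrime.comap f
  haveI hImax : I.IsMaximal := IsArtinianRing.isMaximal_of_isPrime I
  have hπsurj : Function.Surjective π := by
    intro c
    exact ⟨algebraMap F D c, by rw [AlgHom.commutes]; simp⟩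
  have hker : (RingHom.ker π).IsMaximal := RingHom.ker_isMaximal_of_surjective _ hπsurj
  have hIker : RingHom.ker π = I := by
    rw [IsLocalRing.eq_maximalIdeal hker, IsLocalRing.eq_maximalIdeal hImax]
  -- now prove surjectivity
  intro x
  obtain ⟨r, rfl⟩ := Ideal.Quotient.mk_surjective x
  obtain ⟨a, ha⟩ := MS.lemA hres J hJ r
  refine ⟨a, ?_⟩
  have hmem : ∀ d : D, π d = 0 → ∀ u : K, u ⊗ₜ[F] d ∈ J := by
    intro d hd u
    have h1 : d ∈ I := by rw [← hIker]; exact RingHom.mem_ker.mpr hd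
    have h2 : u ⊗ₜ[F] d = (u ⊗ₜ[F] (1:D)) * f d := by
      show u ⊗ₜ[F] d = (u ⊗ₜ[F] (1:D)) * ((1:K) ⊗ₜ[F] d)
      rw [Algebra.TensorProduct.tmul_mul_tmul, mul_one, one_mul]
    rw [h2]
    exact J.mul_mem_left _ (Ideal.mem_comap.mp h1)
  have hδmem : δ a - a ⊗ₜ[F] (1:D) ∈ J := by
    rw [hδ a]
    have : a ⊗ₜ[F] bD 0 + ∑ i : Fin m, (der i a) ⊗ₜ[F] bD i.succ - a ⊗ₜ[F] (1:D)
        = a ⊗ₜ[F] (bD 0 - 1) + ∑ i : Fin m, (der i a) ⊗ₜ[F] bD i.succ := by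
      rw [TensorProduct.tmul_sub]; ring
    rw [this]
    refine J.add_mem (hmem _ ?_ a) (Ideal.sum_mem J fun i _ => hmem _ ?_ (der i a))
    · rw [map_sub, hb0, map_one, sub_self]
    · exact hbi i.succ (Fin.succ_ne_zero i)
  show Ideal.Quotient.mk J (δ a) = Ideal.Quotient.mk J r
  rw [Ideal.Quotient.eq]
  have : δ a - r = (δ a - a ⊗ₜ[F] (1:D)) - (r - a ⊗ₜ[F] (1:D)) := by ring
  rw [this]
  exact J.sub_mem hδmem ha

end

/-- **Inversive 𝒟-fields and bases (Moosa–Scanlon setting).**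

Let `F` be a field, `D` a nonzero finite-dimensional commutative `F`-algebra with an `F`-algebra
homomorphism `π : D → F`, and `e = (bD i)` an `F`-basis of `D` with `π (e 0) = 1` and
`π (e i) = 0` for `i ≠ 0`.  Assume (the Moosa–Scanlon assumption) that for every maximal ideal
`I` of `D` the composite `F → D → D/I` is an isomorphism.  Let `K` be a field extension of `F`,
so that `𝒟_K = K ⊗[F] D`, and suppose `(K; ∂₁, …, ∂_m)` is a `𝒟`-field, i.e. the map
`δ : K → 𝒟_K`, `a ↦ a ⊗ e₀ + Σᵢ ∂ᵢ(a) ⊗ eᵢ`, is an `F`-algebra homomorphism.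

Then the `𝒟`-field is inversive (for every maximal ideal `J` of `𝒟_K`, the composite of `δ`
with the residue map `𝒟_K → 𝒟_K/J` is surjective) if and only if `e` is a basis of `𝒟_K` as a
`K`-vector space with scalar multiplication through `δ`, i.e. every element of `𝒟_K` is uniquely
of the form `Σᵢ δ(aᵢ) * (1 ⊗ eᵢ)`.  In particular, if `D` is a local `F`-algebra, then `e` is
such a basis. -/

theorem inversive_iff_delta_basis
    (F D K : Type*) [Field F] [CommRing D] [Nontrivial D] [Algebra F D]
    [FiniteDimensional F D] [Field K] [Algebra F K]
    (π : D →ₐ[F] F) (m : ℕ) (bD : Module.Basis (Fin (m + 1)) F D)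
    (hb0 : π (bD 0) = 1) (hbi : ∀ i : Fin (m + 1), i ≠ 0 → π (bD i) = 0)
    (hres : ∀ I : Ideal D, I.IsMaximal → Function.Bijective (algebraMap F (D ⧸ I)))
    (der : Fin m → K → K)
    (δ : K →ₐ[F] (K ⊗[F] D))
    (hδ : ∀ a : K, δ a = a ⊗ₜ[F] bD 0 + ∑ i : Fin m, (der i a) ⊗ₜ[F] bD i.succ) :
    ((∀ J : Ideal (K ⊗[F] D), J.IsMaximal →
        Function.Surjective fun a : K => Ideal.Quotient.mk J (δ a)) ↔
      ∀ r : K ⊗[F] D, ∃! a : Fin (m + 1) → K,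
        r = ∑ i : Fin (m + 1), δ (a i) * ((1 : K) ⊗ₜ[F] bD i)) ∧
    (IsLocalRing D →
      ∀ r : K ⊗[F] D, ∃! a : Fin (m + 1) → K,
        r = ∑ i : Fin (m + 1), δ (a i) * ((1 : K) ⊗ₜ[F] bD i)) := by
  haveI : IsNoetherianRing (K ⊗[F] D) := isNoetherian_of_tower K inferInstance
  have hiff := MS.existsUnique_iff_bijective (K := K) m bD δ
  have fwd : (∀ J : Ideal (K ⊗[F] D), J.IsMaximal →
      Function.Surjective fun a : K => Ideal.Quotient.mk J (δ a)) →
      Function.Bijective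
        (Algebra.TensorProduct.productMap δ
          (Algebra.TensorProduct.includeRight : D →ₐ[F] K ⊗[F] D)) := by
    intro H
    have hsurj := MS.mu_surjective hres δ H
    exact ⟨MS.inj_of_surj
      (Algebra.TensorProduct.productMap δ
        (Algebra.TensorProduct.includeRight : D →ₐ[F] K ⊗[F] D)).toRingHom hsurj, hsurj⟩
  refine ⟨⟨fun H => hiff.mpr (fwd H),
    fun H J hJ => MS.inversive_of_bijective hres δ (hiff.mp H) J hJ⟩,
    fun hloc => hiff.mpr (fwd (fun J hJ =>
      MS.local_inversive hres π m bD hb0 hbi der δ hδ hloc J hJ))⟩
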